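/- For every natural number m, sum_{k=0}^m g(k) = (9/8)*(m+1)*(m+3)*g(m+1), where g(k) = (3k+1)!/(k! * k! * (k+1)!) * 3^(-3k) / (k+2). -/

import Mathlib

/-- g(k) = (3k+1)!/(k! * k! * (k+1)!) * 3^(-3k) / (k+2) as a rational number. -/
noncomputable def g (k : ℕ) : ℚ :=
  ((3 * k + 1).factorial : ℚ) /
    ((k.factorial : ℚ) * (k.factorial : ℚ) * ((k + 1).factorial : ℚ)) /
    (3 : ℚ) ^ (3 * k) / (k + 2)

lemma g_succ (k : ℕ) :
    g (k + 1) = g k * ((3 * k + 2) * (3 * k + 3) * (3 * k + 4)) *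
      (k + 2) / (27 * (k + 1) ^ 2 * (k + 2) * (k + 3)) := by
  have h1 : 3 * (k + 1) + 1 = (3 * k + 1) + 3 := by ring
  have h2 : (3 * (k + 1) + 1).factorial
      = (3 * k + 4) * ((3 * k + 3) * ((3 * k + 2) * (3 * k + 1).factorial)) := by
    rw [h1]
    rfl
  have hfk : (k.factorial : ℚ) ≠ 0 := Nat.cast_ne_zero.2 k.factorial_ne_zero
  have hfk1 : ((k + 1).factorial : ℚ) ≠ 0 := Nat.cast_ne_zero.2 (k + 1).factorial_ne_zero
  have hk1 : ((k : ℚ) + 1) ≠ 0 := by positivity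
  have hk2 : ((k : ℚ) + 2) ≠ 0 := by positivity
  have hk3 : ((k : ℚ) + 3) ≠ 0 := by positivity
  have h3 : (3 : ℚ) ^ (3 * (k + 1)) = 27 * 3 ^ (3 * k) := by
    rw [show 3 * (k + 1) = 3 * k + 3 by ring, pow_add]; ring
  simp only [g, h2, Nat.factorial_succ, h3]
  push_cast
  field_simp
  ring

/-- ∑_{k=0}^m g(k) = (9/8) * (m+1) * (m+3) * g(m+1). -/
theorem sum_g_closed (m : ℕ) :
    ∑ k ∈ Finset.range (m + 1), g k =
      (9 / 8 : ℚ) * (m + 1) * (m + 3) * g (m + 1) := by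
  induction m with
  | zero =>
      simp [g]
      norm_num [Nat.factorial]
  | succ n ih =>
      rw [Finset.sum_range_succ, ih, g_succ (n + 1)]
      have hn2 : ((n : ℚ) + 2) ≠ 0 := by positivity
      have hn3 : ((n : ℚ) + 3) ≠ 0 := by positivity
      have hn4 : ((n : ℚ) + 4) ≠ 0 := by positivity
      push_cast
      field_simp
      ring
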